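/- Let m and n be distinct squarefree integers, both different from 1, and let A = ℤ[√m, √n] ⊆ ℂ. Then there exists a nonzero ℤ-linear map D : A → A with D(1) = 0 such that for every pair (σ,τ) of two distinct ring endomorphisms of A, D is not a (σ,τ)-derivation. -/

import Mathlib

open Submodule

private lemma aux_int_sq (k : ℤ) (r : ℚ) (hr : r ^ 2 = (k : ℚ)) : ∃ z : ℤ, z ^ 2 = k := by
  have hden : r.den = 1 := by
    have h1 : (r ^ 2).den = 1 := by rw [hr]; exact Rat.den_intCast k
    rw [Rat.den_pow] at h1
    rw [pow_two] at h1
    exact Nat.eq_one_of_mul_eq_one_right h1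
  refine ⟨r.num, ?_⟩
  have h2 : ((r.num : ℤ) : ℚ) = r := (Rat.den_eq_one_iff r).mp hden
  have h3 : ((r.num ^ 2 : ℤ) : ℚ) = ((k : ℤ) : ℚ) := by push_cast; rw [h2]; exact hr
  exact_mod_cast h3

private lemma aux_rat_sq (k : ℤ) (hk : Squarefree k) (hk1 : k ≠ 1) (r : ℚ)
    (hr : r ^ 2 = (k : ℚ)) : False := by
  obtain ⟨z, hz⟩ := aux_int_sq k r hr
  have hdvd : z * z ∣ k := ⟨1, by linear_combination -hz⟩
  rcases Int.isUnit_iff.mp (hk z hdvd) with h | h <;>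
    · rw [h] at hz; norm_num at hz; exact hk1 hz.symm

private lemma aux_indep2 (k : ℤ) (hk : Squarefree k) (hk1 : k ≠ 1) (s : ℂ)
    (hs : s ^ 2 = (k : ℂ)) (a b : ℚ) (h : (a : ℂ) + (b : ℂ) * s = 0) : a = 0 ∧ b = 0 := by
  by_cases hb : b = 0
  · subst hb
    push_cast at h
    simp only [zero_mul, add_zero] at h
    exact ⟨by exact_mod_cast h, rfl⟩
  · exfalso
    have hbC : (b : ℂ) ≠ 0 := by exact_mod_cast hb
    have hsv : s = -(a : ℂ) / (b : ℂ) := by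
      rw [eq_div_iff hbC]; linear_combination h
    have e1 : ((-(a / b) : ℚ) : ℂ) = s := by push_cast; rw [hsv]; ring
    have h2 : ((-(a / b) : ℚ) : ℂ) ^ 2 = ((k : ℚ) : ℂ) := by
      rw [e1, hs]; norm_cast
    exact aux_rat_sq k hk hk1 (-(a / b)) (by exact_mod_cast h2)

set_option maxHeartbeats 1000000 in
set_option synthInstance.maxHeartbeats 200000 in
/-- Let `m`, `n` be distinct squarefree integers, both different from `1`, and
let `A = ℤ[√m, √n] ⊆ ℂ`.  Then there exists a nonzero `ℤ`-linear map `D : A → A` with `D 1 = 0`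
such that for every pair `(σ,τ)` of two distinct ring endomorphisms of `A`, `D` is not a
`(σ,τ)`-derivation. -/
theorem stmt19 (m n : ℤ) (hm : Squarefree m) (hn : Squarefree n)
    (hm1 : m ≠ 1) (hn1 : n ≠ 1) (hmn : m ≠ n)
    (sm sn : ℂ) (hsm : sm ^ 2 = (m : ℂ)) (hsn : sn ^ 2 = (n : ℂ)) :
    ∃ D : Algebra.adjoin ℤ ({sm, sn} : Set ℂ) →ₗ[ℤ] Algebra.adjoin ℤ ({sm, sn} : Set ℂ),
      D ≠ 0 ∧ D 1 = 0 ∧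
      ∀ σ τ : Algebra.adjoin ℤ ({sm, sn} : Set ℂ) →+* Algebra.adjoin ℤ ({sm, sn} : Set ℂ),
        σ ≠ τ → ¬ (∀ x y, D (x * y) = D x * τ y + σ x * D y) := by
  set AA := Algebra.adjoin ℤ ({sm, sn} : Set ℂ) with hAA
  set v : Fin 4 → ℂ := ![1, sm, sn, sm * sn] with hv
  -- linear independence over ℚ
  have hliQ : LinearIndependent ℚ v := by
    rw [Fintype.linearIndependent_iff]
    intro g hg
    rw [Fin.sum_univ_four] at hg
    simp only [hv, Matrix.cons_val_zero, Matrix.cons_val_one, Matrix.head_cons,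
      Matrix.cons_val_two, Matrix.cons_val_three, Matrix.tail_cons, smul_eq_mul,
      Rat.smul_one_eq_cast, Rat.smul_def] at hg
    have hg' : ((g 0 : ℂ)) + (g 1 : ℂ) * sm + (g 2 : ℂ) * sn + (g 3 : ℂ) * (sm * sn) = 0 := by
      linear_combination hg
    have hcd : g 2 = 0 ∧ g 3 = 0 := by
      by_contra hne
      have he : ((g 2 : ℂ)) + (g 3 : ℂ) * sm ≠ 0 := by
        intro h0
        obtain ⟨h2, h3⟩ := aux_indep2 m hm hm1 sm hsm _ _ h0
        exact hne ⟨h2, h3⟩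
      have hsq : ((g 0 : ℂ) + (g 1 : ℂ) * sm) ^ 2
          = (n : ℂ) * ((g 2 : ℂ) + (g 3 : ℂ) * sm) ^ 2 := by
        linear_combination ((g 0 : ℂ) + (g 1 : ℂ) * sm - ((g 2 : ℂ) + (g 3 : ℂ) * sm) * sn) * hg'
          + ((g 2 : ℂ) + (g 3 : ℂ) * sm) ^ 2 * hsn
      set M : ℚ := (m : ℚ) with hM
      set N : ℚ := (n : ℚ) with hN
      have hq : g 2 ^ 2 - g 3 ^ 2 * M ≠ 0 := by
        intro h0
        by_cases hd : g 3 = 0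
        · have h2 : g 2 = 0 := by
            have hsq0 : g 2 ^ 2 = 0 := by rw [hd] at h0; linear_combination h0
            exact sq_eq_zero_iff.mp hsq0
          apply he; rw [h2, hd]; push_cast; ring
        · apply aux_rat_sq m hm hm1 (g 2 / g 3)
          rw [← hM]
          field_simp
          linear_combination h0
      set X : ℚ := g 0 * g 2 - g 1 * g 3 * M with hX
      set Y : ℚ := g 1 * g 2 - g 0 * g 3 with hY
      set Q : ℚ := g 2 ^ 2 - g 3 ^ 2 * M with hQ
      have heq : ((X : ℂ) + (Y : ℂ) * sm) * ((g 2 : ℂ) + (g 3 : ℂ) * sm)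
          = (Q : ℂ) * ((g 0 : ℂ) + (g 1 : ℂ) * sm) := by
        rw [hX, hY, hQ, hM]
        push_cast
        linear_combination (((g 1 : ℂ)) * (g 2 : ℂ) - (g 0 : ℂ) * (g 3 : ℂ)) * (g 3 : ℂ) * hsm
      have hsq2 : ((X : ℂ) + (Y : ℂ) * sm) ^ 2 = (Q : ℂ) ^ 2 * (n : ℂ) := by
        apply mul_right_cancel₀ (pow_ne_zero 2 he)
        linear_combination (((X : ℂ) + (Y : ℂ) * sm) * ((g 2 : ℂ) + (g 3 : ℂ) * sm)
          + (Q : ℂ) * ((g 0 : ℂ) + (g 1 : ℂ) * sm)) * heq + (Q : ℂ) ^ 2 * hsq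
      have hfin : (((X ^ 2 + Y ^ 2 * M - Q ^ 2 * N : ℚ)) : ℂ) + ((2 * X * Y : ℚ) : ℂ) * sm = 0 := by
        rw [hM, hN]
        push_cast
        linear_combination hsq2 - (Y : ℂ) ^ 2 * hsm
      obtain ⟨E1, E2⟩ := aux_indep2 m hm hm1 sm hsm _ _ hfin
      have hXY : X = 0 ∨ Y = 0 := by
        rcases mul_eq_zero.mp (by linarith [E2] : (2 * X) * Y = 0) with h | h
        · left; linarith
        · right; exact h
      rcases hXY with hY0 | hY0
      · -- X = 0 : Y^2 M = Q^2 N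
        rw [hY0] at E1
        have hE : Y ^ 2 * M = Q ^ 2 * N := by linarith
        have hMY : (M * Y / Q) ^ 2 = ((m * n : ℤ) : ℚ) := by
          push_cast
          rw [← hM, ← hN]
          field_simp
          linear_combination M * hE
        obtain ⟨z, hz⟩ := aux_int_sq (m * n) _ hMY
        have hmz : m ∣ z := (hm.dvd_pow_iff_dvd two_ne_zero).mp ⟨n, hz⟩
        obtain ⟨t, rfl⟩ := hmz
        have hm0 : m ≠ 0 := hm.ne_zero
        have hnt : n = m * t ^ 2 := by
          have : m * n = m * (m * t ^ 2) := by linear_combination -hz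
          exact mul_left_cancel₀ hm0 this
        have : IsUnit t := hn t ⟨m, by linear_combination hnt⟩
        rcases Int.isUnit_iff.mp this with h | h <;>
          · rw [h] at hnt; norm_num at hnt; exact hmn hnt.symm
      · -- Y = 0 : X^2 = Q^2 N
        rw [hY0] at E1
        apply aux_rat_sq n hn hn1 (X / Q)
        rw [← hN]
        field_simp
        linear_combination E1
    obtain ⟨h2, h3⟩ := hcd
    rw [h2, h3] at hg'
    push_cast at hg'
    have hg'' : ((g 0 : ℂ)) + (g 1 : ℂ) * sm = 0 := by linear_combination hg'
    obtain ⟨h0, h1⟩ := aux_indep2 m hm hm1 sm hsm _ _ hg''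
    intro i; fin_cases i <;> assumption
  have hliZ : LinearIndependent ℤ v := by
    apply hliQ.restrict_scalars
    intro a b hab
    have : (a : ℚ) = b := by simpa using hab
    exact_mod_cast this
  -- spanning
  set S : Submodule ℤ ℂ := span ℤ (Set.range v) with hS
  have hmem : ∀ i : Fin 4, v i ∈ S := fun i => subset_span ⟨i, rfl⟩
  have h1S : (1 : ℂ) ∈ S := hmem 0
  have hsmS : sm ∈ S := hmem 1
  have hsnS : sn ∈ S := hmem 2
  have hsmnS : sm * sn ∈ S := hmem 3
  have hprod : ∀ i j : Fin 4, v i * v j ∈ S := by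
    have e1 : sm * sm = m • (1 : ℂ) := by
      rw [zsmul_eq_mul, mul_one]; linear_combination hsm
    have e2 : sn * sn = n • (1 : ℂ) := by
      rw [zsmul_eq_mul, mul_one]; linear_combination hsn
    have e3 : sm * (sm * sn) = m • sn := by
      rw [zsmul_eq_mul]; linear_combination sn * hsm
    have e4 : sn * (sm * sn) = n • sm := by
      rw [zsmul_eq_mul]; linear_combination sm * hsn
    have e5 : (sm * sn) * (sm * sn) = (m * n) • (1 : ℂ) := by
      rw [zsmul_eq_mul, mul_one]; push_cast
      linear_combination sn ^ 2 * hsm + (m : ℂ) * hsn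
    intro i j
    fin_cases i <;> fin_cases j
    · show (1 : ℂ) * 1 ∈ S; rw [one_mul]; exact h1S
    · show (1 : ℂ) * sm ∈ S; rw [one_mul]; exact hsmS
    · show (1 : ℂ) * sn ∈ S; rw [one_mul]; exact hsnS
    · show (1 : ℂ) * (sm * sn) ∈ S; rw [one_mul]; exact hsmnS
    · show sm * 1 ∈ S; rw [mul_one]; exact hsmS
    · show sm * sm ∈ S; rw [e1]; exact S.smul_mem _ h1S
    · show sm * sn ∈ S; exact hsmnS
    · show sm * (sm * sn) ∈ S; rw [e3]; exact S.smul_mem _ hsnS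
    · show sn * 1 ∈ S; rw [mul_one]; exact hsnS
    · show sn * sm ∈ S; rw [mul_comm]; exact hsmnS
    · show sn * sn ∈ S; rw [e2]; exact S.smul_mem _ h1S
    · show sn * (sm * sn) ∈ S; rw [e4]; exact S.smul_mem _ hsmS
    · show sm * sn * 1 ∈ S; rw [mul_one]; exact hsmnS
    · show sm * sn * sm ∈ S; rw [mul_comm, e3]; exact S.smul_mem _ hsnS
    · show sm * sn * sn ∈ S; rw [mul_comm, e4]; exact S.smul_mem _ hsmS
    · show sm * sn * (sm * sn) ∈ S; rw [e5]; exact S.smul_mem _ h1S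
  have hmulS : ∀ x y : ℂ, x ∈ S → y ∈ S → x * y ∈ S := by
    intro x y hx hy
    induction hx using Submodule.span_induction with
    | mem x hx =>
      obtain ⟨i, rfl⟩ := hx
      induction hy using Submodule.span_induction with
      | mem y hy => obtain ⟨j, rfl⟩ := hy; exact hprod i j
      | zero => rw [mul_zero]; exact S.zero_mem
      | add y z _ _ hy hz => rw [mul_add]; exact S.add_mem hy hz
      | smul c y _ hy => rw [mul_smul_comm]; exact S.smul_mem c hy
    | zero => rw [zero_mul]; exact S.zero_mem
    | add a b _ _ ha hb => rw [add_mul]; exact S.add_mem ha hb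
    | smul c a _ ha => rw [smul_mul_assoc]; exact S.smul_mem c ha
  have htop : Subalgebra.toSubmodule AA = S := by
    apply le_antisymm
    · have : AA ≤ S.toSubalgebra h1S hmulS := by
        apply Algebra.adjoin_le
        intro x hx
        rcases hx with h | h
        · rw [h]; exact hsmS
        · rw [Set.mem_singleton_iff.mp h]; exact hsnS
      exact this
    · rw [span_le]
      rintro x ⟨i, rfl⟩
      have hsmA : sm ∈ AA := Algebra.subset_adjoin (by left; rfl)
      have hsnA : sn ∈ AA := Algebra.subset_adjoin (by right; rfl)
      fin_cases i
      · show (1 : ℂ) ∈ AA; exact AA.one_mem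
      · show sm ∈ AA; exact hsmA
      · show sn ∈ AA; exact hsnA
      · show sm * sn ∈ AA; exact AA.mul_mem hsmA hsnA
  set w : Fin 4 → AA := fun i => ⟨v i, by rw [← Subalgebra.mem_toSubmodule, htop]; exact hmem i⟩
    with hw
  have hcoe : (Submodule.subtype (Subalgebra.toSubmodule AA)) ∘ w = v := by
    funext i; rfl
  have hwli : LinearIndependent ℤ w := by
    apply LinearIndependent.of_comp (Submodule.subtype (Subalgebra.toSubmodule AA))
    rw [hcoe]; exact hliZ
  have hwspan : ⊤ ≤ Submodule.span ℤ (Set.range w) := by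
    rintro x -
    have hx1 : (x : ℂ) ∈ S := by rw [← htop]; exact x.2
    obtain ⟨c, hc⟩ := (mem_span_range_iff_exists_fun ℤ).mp hx1
    have hxeq : x = ∑ i, c i • w i := by
      apply Subtype.ext
      rw [← hc]
      push_cast
      rfl
    rw [hxeq]
    exact Submodule.sum_mem _ fun i _ => Submodule.smul_mem _ _ (subset_span ⟨i, rfl⟩)
  let b : Module.Basis (Fin 4) ℤ AA := Module.Basis.mk hwli hwspan
  have hb : ∀ i, b i = w i := fun i => Module.Basis.mk_apply hwli hwspan i
  have hD : ∀ i : Fin 4,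
      ((b.coord 3).smulRight (1 : AA)) (w i) = (if i = 3 then 1 else 0) := by
    intro i
    rw [LinearMap.smulRight_apply, ← hb i, Module.Basis.coord_apply, Module.Basis.repr_self]
    by_cases h : i = 3
    · simp [h]
    · simp [Finsupp.single_eq_of_ne h, h]
  have h10 : (1 : AA) ≠ 0 := fun h =>
    one_ne_zero (congrArg Subtype.val h : (1 : ℂ) = 0)
  have hD3 : ((b.coord 3).smulRight (1 : AA)) (w 3) = 1 := by simpa using hD 3
  have hD1 : ((b.coord 3).smulRight (1 : AA)) (w 1) = 0 := by simpa using hD 1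
  have hD2 : ((b.coord 3).smulRight (1 : AA)) (w 2) = 0 := by simpa using hD 2
  have hD0 : ((b.coord 3).smulRight (1 : AA)) (w 0) = 0 := by simpa using hD 0
  refine ⟨(b.coord 3).smulRight (1 : AA), ?_, ?_, ?_⟩
  · intro h0
    rw [h0] at hD3
    simp only [LinearMap.zero_apply] at hD3
    exact h10 hD3.symm
  · have h1w : (1 : AA) = w 0 := Subtype.ext rfl
    rw [← h1w] at hD0
    exact hD0
  · intro σ τ hστ hder
    have hxy : w 1 * w 2 = w 3 := Subtype.ext rfl
    have hc := hder (w 1) (w 2)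
    rw [hxy, hD1, hD2, hD3, zero_mul, mul_zero, add_zero] at hc
    exact h10 hc
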